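/- For all real x, y with x > 0 and 0 < y < 17x: min(x,y) ≤ μ₂(x,y) ≤ max(x,y), with strict inequalities whenever x ≠ y; moreover μ₂(r·x, r·y) = r·μ₂(x,y) for every real r > 0. -/

import Mathlib

noncomputable def mu1 (x y : ℝ) : ℝ :=
  (2 * x + Real.sqrt (2 * x * (x + y))) / 4

noncomputable def mu2 (x y : ℝ) : ℝ :=
  x * (6 * Real.sqrt (2 * x * (x + y)) - y - 3 * x) /
    (2 * (2 * x + Real.sqrt (2 * x * (x + y))))

theorem stmt16 (x y : ℝ) (hx : 0 < x) (hy : 0 < y) (hy17 : y < 17 * x) :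
    (min x y ≤ mu2 x y ∧ mu2 x y ≤ max x y) ∧
    (x ≠ y → min x y < mu2 x y ∧ mu2 x y < max x y) ∧
    (∀ r : ℝ, 0 < r → mu2 (r * x) (r * y) = r * mu2 x y) := by
  have hnn : (0:ℝ) ≤ 2 * x * (x + y) := by positivity
  set s := Real.sqrt (2 * x * (x + y)) with hs
  have hsq : s * s = 2 * x * (x + y) := Real.mul_self_sqrt hnn
  have hspos : 0 < s := Real.sqrt_pos.mpr (by positivity)
  have hden : 0 < 2 * (2 * x + s) := by linarith
  have hmu : mu2 x y = x * (6 * s - y - 3 * x) / (2 * (2 * x + s)) := rfl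
  have hstrict : x ≠ y → min x y < mu2 x y ∧ mu2 x y < max x y := by
    intro hne
    rcases lt_or_gt_of_ne hne with hxy | hxy
    · -- x < y
      rw [min_eq_left hxy.le, max_eq_right hxy.le]
      constructor
      · rw [hmu, lt_div_iff₀ hden]
        -- need 4s > y + 7x, from 16 s^2 - (y+7x)^2 = -(y-x)(y-17x) > 0
        nlinarith [hsq, hspos, mul_pos (sub_pos.mpr hxy) (sub_pos.mpr hy17),
          mul_pos hx hspos, sq_nonneg (4*s - (y + 7*x)), mul_pos hx hx]
      · rw [hmu, div_lt_iff₀ hden]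
        -- need (6x-2y) s < 5xy + 3x^2
        rcases le_or_gt (3*x) y with h3 | h3
        · nlinarith [mul_nonneg (sub_nonneg.mpr h3) hspos.le, mul_pos hx hy, mul_pos hx hx]
        · have key : (6*x - 2*y) * s < 5*x*y + 3*x^2 := by
            have hb : 0 < 5*x*y + 3*x^2 := by positivity
            have ha : 0 < (6*x - 2*y) * s := mul_pos (by linarith) hspos
            nlinarith [hsq, mul_pos hx (sub_pos.mpr hxy), mul_pos hx hy,
              mul_pos hy (sub_pos.mpr h3), mul_pos (mul_pos hx hy) (sub_pos.mpr h3),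
              mul_pos (mul_pos hx hx) hy, mul_pos ha hb, sq_nonneg ((6*x-2*y)*s - (5*x*y+3*x^2))]
          nlinarith [key, hspos]
    · -- y < x
      rw [min_eq_right hxy.le, max_eq_left hxy.le]
      constructor
      · rw [hmu, lt_div_iff₀ hden]
        -- need (6x-2y) s > 5xy + 3x^2
        have h3 : y < 3*x := by linarith
        have key : 5*x*y + 3*x^2 < (6*x - 2*y) * s := by
          have hb : 0 < 5*x*y + 3*x^2 := by positivity
          have ha : 0 < (6*x - 2*y) * s := mul_pos (by linarith) hspos
          nlinarith [hsq, mul_pos hx (sub_pos.mpr hxy), mul_pos hx hy,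
            mul_pos hy (sub_pos.mpr h3), mul_pos (mul_pos hx hy) (sub_pos.mpr h3),
            mul_pos (mul_pos hx hx) hy, mul_pos ha hb, sq_nonneg ((6*x-2*y)*s - (5*x*y+3*x^2))]
        nlinarith [key, hspos]
      · rw [hmu, div_lt_iff₀ hden]
        -- need 4s < y + 7x
        nlinarith [hsq, hspos, mul_pos (sub_pos.mpr hxy) (sub_pos.mpr (show y < 17*x by linarith)),
          mul_pos hx hspos, sq_nonneg (4*s - (y + 7*x)), mul_pos hx hx]
  have hhom : ∀ r : ℝ, 0 < r → mu2 (r * x) (r * y) = r * mu2 x y := by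
    intro r hr
    have hsr : Real.sqrt (2 * (r * x) * (r * x + r * y)) = r * s := by
      rw [show 2 * (r * x) * (r * x + r * y) = r^2 * (2 * x * (x + y)) by ring,
        Real.sqrt_mul (sq_nonneg r), Real.sqrt_sq hr.le]
    have hdr : (2 * (2 * (r*x) + r * s)) ≠ 0 := by positivity
    have hd : (2 * (2 * x + s)) ≠ 0 := ne_of_gt hden
    rw [mu2, mu2, hsr, ← hs]
    field_simp
  refine ⟨?_, hstrict, hhom⟩
  rcases eq_or_ne x y with heq | hne
  · subst heq
    have hs2 : s = 2 * x := by
      rw [hs, show 2 * x * (x + x) = (2*x)^2 by ring, Real.sqrt_sq (by positivity)]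
    have : mu2 x x = x := by
      rw [hmu, hs2, show (6:ℝ) * (2*x) - x - 3*x = 2*(2*x+2*x) by ring,
        mul_div_assoc, div_self (by positivity), mul_one]
    simp [this]
  · obtain ⟨h1, h2⟩ := hstrict hne
    exact ⟨h1.le, h2.le⟩
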